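/- Let p be a prime, let k and n be positive integers, let s be in [n], let t be in [p], and let α be in (0,1). Define Bad_{k,s,≥t}^α(n) to be the set of all vectors a in F_p^n such that R_k^α(b) ≥ t·2^{2k}·|b|^{2k}/p for every subvector b of a with |b| ≥ s. Then |Bad_{k,s,≥t}^α(n)| ≤ (s/n)^{2k−1} · (αt)^{s−n} · p^n. -/

import Mathlib

open scoped BigOperators

/-- `R_k^α(a)`: the number of choices of `2k` signs and `2k` indices with
`±a_{i₁} ± ⋯ ± a_{i_{2k}} = 0` in `F_p` that use at least `(1+α)k` distinct indices. -/
noncomputable def RkA (p : ℕ) (k : ℕ) (α : ℝ) {ι : Type} (a : ι → ZMod p) : ℕ :=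
  Set.ncard {z : (Fin (2 * k) → Bool) × (Fin (2 * k) → ι) |
    ((∑ j, if z.1 j then a (z.2 j) else -a (z.2 j)) = 0) ∧
    (1 + α) * k ≤ ((Set.range z.2).ncard : ℝ)}

open scoped Classical
set_option linter.unusedSectionVars false
set_option linter.unusedVariables false
set_option linter.unnecessarySeqFocus false
set_option maxHeartbeats 1000000

namespace CTaux

/-- the signed sum of a tuple -/
noncomputable def ssum (p k : ℕ) {ι : Type} (a : ι → ZMod p)
    (z : (Fin (2 * k) → Bool) × (Fin (2 * k) → ι)) : ZMod p :=
  ∑ j, if z.1 j then a (z.2 j) else -a (z.2 j)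

/-- counted tuples, in the ambient index type, with indices restricted to `I` -/
noncomputable def cntSet (p k : ℕ) (α : ℝ) {ι : Type} [Fintype ι] [DecidableEq ι]
    (I : Finset ι) (a : ι → ZMod p) :
    Finset ((Fin (2 * k) → Bool) × (Fin (2 * k) → ι)) :=
  Finset.univ.filter fun z =>
    (∀ j, z.2 j ∈ I) ∧ ssum p k a z = 0 ∧
      (1 + α) * k ≤ ((Finset.image z.2 Finset.univ).card : ℝ)

variable {p k : ℕ} {ι : Type} [Fintype ι] [DecidableEq ι]

theorem range_ncard_eq (f : Fin (2 * k) → ι) :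
    (Set.range f).ncard = (Finset.image f Finset.univ).card := by
  rw [← Set.ncard_coe_finset]
  congr 1
  rw [Finset.coe_image, Finset.coe_univ, Set.image_univ]

theorem RkA_eq (α : ℝ) (I : Finset ι) (a : ι → ZMod p) :
    RkA p k α (fun i : {x // x ∈ I} => a i.1) = (cntSet p k α I a).card := by
  classical
  set S : Set ((Fin (2 * k) → Bool) × (Fin (2 * k) → {x // x ∈ I})) :=
    {z | ((∑ j, if z.1 j then a (z.2 j).1 else -a (z.2 j).1) = 0) ∧
      (1 + α) * k ≤ ((Set.range z.2).ncard : ℝ)} with hS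
  have hR : RkA p k α (fun i : {x // x ∈ I} => a i.1) = S.ncard := rfl
  set e : ((Fin (2 * k) → Bool) × (Fin (2 * k) → {x // x ∈ I})) →
      ((Fin (2 * k) → Bool) × (Fin (2 * k) → ι)) :=
    fun z => (z.1, fun j => (z.2 j).1) with he
  have hinj : Function.Injective e := by
    rintro ⟨b1, f1⟩ ⟨b2, f2⟩ h
    simp only [he, Prod.mk.injEq] at h
    refine Prod.ext h.1 ?_
    funext j
    exact Subtype.ext (congrFun h.2 j)
  have hncr : ∀ g : Fin (2 * k) → {x // x ∈ I},
      (Set.range g).ncard = (Finset.image (fun j => (g j).1) Finset.univ).card := by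
    intro g
    have h1 : (Subtype.val '' Set.range g).ncard = (Set.range g).ncard :=
      Set.ncard_image_of_injective _ Subtype.val_injective
    rw [← h1, ← Set.range_comp]
    exact range_ncard_eq _
  have himg : e '' S = ↑(cntSet p k α I a) := by
    ext w
    simp only [Set.mem_image, Finset.coe_filter, cntSet, Set.mem_setOf_eq,
      Finset.mem_coe, Finset.mem_filter, Finset.mem_univ, true_and]
    constructor
    · rintro ⟨z, hz, rfl⟩
      rw [hS, Set.mem_setOf_eq] at hz
      refine ⟨fun j => (z.2 j).2, hz.1, ?_⟩
      have := hz.2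
      rwa [hncr z.2] at this
    · rintro ⟨h1, h2, h3⟩
      refine ⟨(w.1, fun j => (⟨w.2 j, h1 j⟩ : {x // x ∈ I})), ?_, ?_⟩
      · rw [hS, Set.mem_setOf_eq]
        constructor
        · exact h2
        · rw [hncr]
          exact h3
      · rfl
  rw [hR, ← Set.ncard_image_of_injective S hinj, himg, Set.ncard_coe_finset]



noncomputable def fiberCard (k : ℕ) {ι : Type} [DecidableEq ι]
    (z : (Fin (2 * k) → Bool) × (Fin (2 * k) → ι)) (i : ι) : ℕ :=
  (Finset.univ.filter (fun j => z.2 j = i)).card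

theorem ssum_congr {a b : ι → ZMod p} {I : Finset ι}
    (z : (Fin (2 * k) → Bool) × (Fin (2 * k) → ι))
    (hz : ∀ j, z.2 j ∈ I) (hab : ∀ i ∈ I, a i = b i) :
    ssum p k a z = ssum p k b z := by
  unfold ssum
  refine Finset.sum_congr rfl fun j _ => ?_
  rw [hab _ (hz j)]

/-- Every counted tuple has at least `2αk` indices occurring exactly once. -/
theorem sing_lb (α : ℝ) (hα : 0 < α)
    (z : (Fin (2 * k) → Bool) × (Fin (2 * k) → ι))
    (hd : (1 + α) * k ≤ ((Finset.image z.2 Finset.univ).card : ℝ)) :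
    2 * α * k ≤
      (((Finset.image z.2 Finset.univ).filter (fun i => fiberCard k z i = 1)).card : ℝ) := by
  classical
  set D := Finset.image z.2 Finset.univ with hD
  set Sg := D.filter (fun i => fiberCard k z i = 1) with hSg
  have hsub : Sg ⊆ D := Finset.filter_subset _ _
  have hcard : (Finset.univ : Finset (Fin (2 * k))).card
      = ∑ i ∈ D, fiberCard k z i := by
    refine Finset.card_eq_sum_card_fiberwise fun x _ => ?_
    exact Finset.mem_image_of_mem _ (Finset.mem_univ x)
  have huniv : (Finset.univ : Finset (Fin (2 * k))).card = 2 * k := by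
    simp
  have hlb : ∀ i ∈ D, (if fiberCard k z i = 1 then 1 else 2) ≤ fiberCard k z i := by
    intro i hi
    by_cases h1 : fiberCard k z i = 1
    · simp [h1]
    · have hpos : 0 < fiberCard k z i := by
        rw [hD] at hi
        obtain ⟨j, _, hj⟩ := Finset.mem_image.1 hi
        exact Finset.card_pos.2 ⟨j, Finset.mem_filter.2 ⟨Finset.mem_univ j, hj⟩⟩
      rw [if_neg h1]
      omega
  have hsum : ∑ i ∈ D, (if fiberCard k z i = 1 then 1 else 2) ≤ 2 * k := by
    rw [← huniv, hcard]
    exact Finset.sum_le_sum hlb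
  have hsplit : ∑ i ∈ D, (if fiberCard k z i = 1 then 1 else 2)
      = Sg.card * 1 + (D.card - Sg.card) * 2 := by
    rw [Finset.sum_ite]
    simp only [Finset.sum_const, smul_eq_mul]
    have hnot : (Finset.filter (fun i => ¬ fiberCard k z i = 1) D).card
        = D.card - Sg.card := by
      rw [hSg, Finset.filter_not, Finset.card_sdiff_of_subset (Finset.filter_subset _ _)]
    rw [hnot, hSg]
  have hle : Sg.card ≤ D.card := Finset.card_le_card hsub
  have key : 2 * D.card ≤ 2 * k + Sg.card := by omega
  have hreal : (2:ℝ) * D.card ≤ 2 * k + Sg.card := by exact_mod_cast key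
  nlinarith [hd, hreal]

variable [NeZero p] {s t : ℕ} {α : ℝ}


/-- vectors that are "bad" with respect to every large subset of `J`,
normalized to vanish off `J` -/
noncomputable def badF (p k s t : ℕ) (α : ℝ) {ι : Type} [Fintype ι] [DecidableEq ι]
    [NeZero p] (J : Finset ι) : Finset (ι → ZMod p) :=
  Finset.univ.filter fun a =>
    (∀ j, j ∉ J → a j = 0) ∧
    ∀ I : Finset ι, I ⊆ J → s ≤ I.card →
      (t : ℝ) * 2 ^ (2 * k) * (I.card : ℝ) ^ (2 * k) / p ≤ ((cntSet p k α I a).card : ℝ)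

/-- number of counted tuples of `a` on `J` in which `i` appears exactly once -/
noncomputable def X (p k : ℕ) (α : ℝ) {ι : Type} [Fintype ι] [DecidableEq ι]
    (J : Finset ι) (a : ι → ZMod p) (i : ι) : ℕ :=
  ((cntSet p k α J a).filter (fun z => fiberCard k z i = 1)).card

variable [NeZero p] {s t : ℕ} {α : ℝ}

theorem lemC (hα : 0 < α) (J : Finset ι) (a : ι → ZMod p)
    (ha : a ∈ badF p k s t α J) (hs : s ≤ J.card) :
    2 * α * k * ((t : ℝ) * 2 ^ (2 * k) * (J.card : ℝ) ^ (2 * k) / p) ≤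
      ∑ i ∈ J, (X p k α J a i : ℝ) := by
  classical
  have hbad : (t : ℝ) * 2 ^ (2 * k) * (J.card : ℝ) ^ (2 * k) / p ≤
      ((cntSet p k α J a).card : ℝ) := by
    have := (Finset.mem_filter.1 ha).2.2
    exact this J le_rfl hs
  -- swap the double count
  have hswap : ∑ i ∈ J, (X p k α J a i : ℝ)
      = ∑ z ∈ cntSet p k α J a,
          (((Finset.image z.2 Finset.univ).filter (fun i => fiberCard k z i = 1)).card : ℝ) := by
    push_cast [X]
    rw [← Nat.cast_sum, ← Nat.cast_sum]
    norm_cast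
    calc ∑ i ∈ J, ((cntSet p k α J a).filter (fun z => fiberCard k z i = 1)).card
        = ∑ i ∈ J, ∑ z ∈ cntSet p k α J a, (if fiberCard k z i = 1 then 1 else 0) := by
          refine Finset.sum_congr rfl fun i _ => ?_
          rw [Finset.card_filter]
      _ = ∑ z ∈ cntSet p k α J a, ∑ i ∈ J, (if fiberCard k z i = 1 then 1 else 0) := by
          rw [Finset.sum_comm]
      _ = ∑ z ∈ cntSet p k α J a,
            ((Finset.image z.2 Finset.univ).filter (fun i => fiberCard k z i = 1)).card := by
          refine Finset.sum_congr rfl fun z hz => ?_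
          rw [← Finset.card_filter]
          congr 1
          have hzJ : ∀ j, z.2 j ∈ J := ((Finset.mem_filter.1 hz).2).1
          ext i
          simp only [Finset.mem_filter, Finset.mem_image, Finset.mem_univ, true_and]
          constructor
          · rintro ⟨hiJ, h1⟩
            refine ⟨?_, h1⟩
            have : 0 < fiberCard k z i := by rw [h1]; norm_num
            obtain ⟨j, hj⟩ := Finset.card_pos.1 this
            exact ⟨j, (Finset.mem_filter.1 hj).2⟩
          · rintro ⟨⟨j, hj⟩, h1⟩
            exact ⟨hj ▸ hzJ j, h1⟩
  rw [hswap]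
  have hlow : ∀ z ∈ cntSet p k α J a, 2 * α * k ≤
      (((Finset.image z.2 Finset.univ).filter (fun i => fiberCard k z i = 1)).card : ℝ) := by
    intro z hz
    exact sing_lb α hα z ((Finset.mem_filter.1 hz).2).2.2
  calc 2 * α * k * ((t : ℝ) * 2 ^ (2 * k) * (J.card : ℝ) ^ (2 * k) / p)
      ≤ 2 * α * k * ((cntSet p k α J a).card : ℝ) := by
        refine mul_le_mul_of_nonneg_left hbad ?_
        positivity
    _ = ∑ _z ∈ cntSet p k α J a, (2 * α * k : ℝ) := by
        rw [Finset.sum_const, nsmul_eq_mul, mul_comm]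
    _ ≤ _ := Finset.sum_le_sum hlow


variable [NeZero p] {s t : ℕ} {α : ℝ}

/-- deleting coordinate `i` keeps a vector bad (for the smaller index set) -/
theorem update_mem_badF {J : Finset ι} {a : ι → ZMod p} (i : ι)
    (ha : a ∈ badF p k s t α J) :
    Function.update a i 0 ∈ badF p k s t α (J.erase i) := by
  classical
  obtain ⟨-, hsupp, hcond⟩ := Finset.mem_filter.1 ha
  refine Finset.mem_filter.2 ⟨Finset.mem_univ _, ?_, ?_⟩
  · intro j hj
    by_cases hji : j = i
    · subst hji; simp [Function.update_self]
    · rw [Function.update_of_ne hji]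
      exact hsupp j (fun hJ => hj (Finset.mem_erase.2 ⟨hji, hJ⟩))
  · intro I hIJ hsI
    have hIJ' : I ⊆ J := hIJ.trans (Finset.erase_subset _ _)
    have hiI : i ∉ I := fun h => (Finset.mem_erase.1 (hIJ h)).1 rfl
    have : cntSet p k α I (Function.update a i 0) = cntSet p k α I a := by
      unfold cntSet
      refine Finset.filter_congr fun z _ => ?_
      constructor <;> rintro ⟨h1, h2, h3⟩ <;> refine ⟨h1, ?_, h3⟩
      · rw [← h2]
        refine (ssum_congr z h1 fun x hx => ?_).symm
        rw [Function.update_of_ne (by rintro rfl; exact hiI hx)]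
      · rw [← h2]
        refine ssum_congr z h1 fun x hx => ?_
        rw [Function.update_of_ne (by rintro rfl; exact hiI hx)]
    rw [this]
    exact hcond I hIJ' hsI

/-- if `i` occurs exactly once in `z` and two vectors agreeing off `i` both give signed
sum zero, they agree at `i` as well -/
theorem eq_of_ssum {a b : ι → ZMod p} {i : ι}
    (z : (Fin (2 * k) → Bool) × (Fin (2 * k) → ι))
    (hfib : fiberCard k z i = 1)
    (hoff : ∀ x, x ≠ i → a x = b x)
    (hsa : ssum p k a z = 0) (hsb : ssum p k b z = 0) : a = b := by
  classical
  obtain ⟨j0, hj0⟩ := Finset.card_eq_one.1 hfib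
  have hj0mem : z.2 j0 = i := by
    have : j0 ∈ Finset.univ.filter (fun j => z.2 j = i) := hj0 ▸ Finset.mem_singleton_self j0
    exact (Finset.mem_filter.1 this).2
  have hother : ∀ j, j ≠ j0 → z.2 j ≠ i := by
    intro j hj hji
    have : j ∈ Finset.univ.filter (fun j => z.2 j = i) :=
      Finset.mem_filter.2 ⟨Finset.mem_univ _, hji⟩
    rw [hj0, Finset.mem_singleton] at this
    exact hj this
  have hdiff : ssum p k a z - ssum p k b z
      = (if z.1 j0 then a i - b i else -(a i - b i)) := by
    unfold ssum
    rw [← Finset.sum_sub_distrib]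
    rw [Finset.sum_eq_single j0]
    · rw [hj0mem]
      by_cases hb : z.1 j0 <;> simp [hb] <;> ring
    · intro j _ hj
      have hne : z.2 j ≠ i := hother j hj
      have : a (z.2 j) = b (z.2 j) := hoff _ hne
      by_cases hb : z.1 j <;> simp [hb, this]
    · intro h; exact absurd (Finset.mem_univ j0) h
  rw [hsa, hsb, sub_self] at hdiff
  have hai : a i = b i := by
    by_cases hb : z.1 j0
    · rw [if_pos hb] at hdiff
      exact sub_eq_zero.mp hdiff.symm
    · rw [if_neg hb] at hdiff
      exact sub_eq_zero.mp (neg_eq_zero.mp hdiff.symm)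
  funext x
  by_cases hx : x = i
  · subst hx; exact hai
  · exact hoff x hx

theorem lemD (hi : ∀ {J : Finset ι}, True) : True := trivial

theorem cardZ_le {J : Finset ι} {i : ι} (hi : i ∈ J) :
    ((Finset.univ.filter (fun z : (Fin (2 * k) → Bool) × (Fin (2 * k) → ι) =>
        (∀ j, z.2 j ∈ J) ∧ fiberCard k z i = 1)).card)
      ≤ 2 ^ (2 * k) * ((2 * k) * (J.card - 1) ^ (2 * k - 1)) := by
  classical
  set F : Finset (Fin (2 * k) → ι) := Finset.univ.filter
    (fun f => (∀ j, f j ∈ J) ∧ (Finset.univ.filter (fun j => f j = i)).card = 1) with hF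
  have hZF : (Finset.univ.filter (fun z : (Fin (2 * k) → Bool) × (Fin (2 * k) → ι) =>
      (∀ j, z.2 j ∈ J) ∧ fiberCard k z i = 1))
      = (Finset.univ : Finset (Fin (2 * k) → Bool)) ×ˢ F := by
    ext z
    simp only [Finset.mem_filter, Finset.mem_univ, true_and, Finset.mem_product, hF]
    rfl
  rw [hZF, Finset.card_product]
  have hBool : (Finset.univ : Finset (Fin (2 * k) → Bool)).card = 2 ^ (2 * k) := by
    simp [Finset.card_univ]
  rw [hBool]
  refine Nat.mul_le_mul_left _ ?_
  -- bound card F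
  have hcover : F ⊆ Finset.univ.biUnion (fun j0 : Fin (2 * k) =>
      F.filter (fun f => f j0 = i)) := by
    intro f hf
    obtain ⟨-, -, hone⟩ := Finset.mem_filter.1 hf
    have hpos : 0 < (Finset.univ.filter (fun j => f j = i)).card := by omega
    obtain ⟨j0, hj0⟩ := Finset.card_pos.1 hpos
    refine Finset.mem_biUnion.2 ⟨j0, Finset.mem_univ _, Finset.mem_filter.2
      ⟨hf, (Finset.mem_filter.1 hj0).2⟩⟩
  have heach : ∀ j0 : Fin (2 * k),
      (F.filter (fun f => f j0 = i)).card ≤ (J.card - 1) ^ (2 * k - 1) := by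
    intro j0
    have hsub : F.filter (fun f => f j0 = i) ⊆
        Fintype.piFinset (fun j => if j = j0 then ({i} : Finset ι) else J.erase i) := by
      intro f hf
      obtain ⟨hfF, hfj0⟩ := Finset.mem_filter.1 hf
      obtain ⟨-, hmemJ, hone⟩ := Finset.mem_filter.1 hfF
      have hfib : Finset.univ.filter (fun j => f j = i) = {j0} := by
        obtain ⟨x, hx⟩ := Finset.card_eq_one.1 hone
        have hj0mem : j0 ∈ Finset.univ.filter (fun j => f j = i) :=
          Finset.mem_filter.2 ⟨Finset.mem_univ _, hfj0⟩
        rw [hx] at hj0mem ⊢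
        rw [Finset.mem_singleton] at hj0mem
        rw [hj0mem]
      refine Fintype.mem_piFinset.2 fun j => ?_
      by_cases hj : j = j0
      · rw [if_pos hj, Finset.mem_singleton, hj]
        exact hfj0
      · rw [if_neg hj]
        refine Finset.mem_erase.2 ⟨?_, hmemJ j⟩
        intro hji
        have : j ∈ Finset.univ.filter (fun j => f j = i) :=
          Finset.mem_filter.2 ⟨Finset.mem_univ _, hji⟩
        rw [hfib, Finset.mem_singleton] at this
        exact hj this
    refine (Finset.card_le_card hsub).trans ?_
    rw [Fintype.card_piFinset]
    have : ∏ j : Fin (2 * k), (if j = j0 then ({i} : Finset ι) else J.erase i).card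
        = (if j0 = j0 then ({i} : Finset ι) else J.erase i).card *
          ∏ j ∈ Finset.univ.erase j0, (if j = j0 then ({i} : Finset ι) else J.erase i).card := by
      exact (Finset.mul_prod_erase _ _ (Finset.mem_univ j0)).symm
    rw [this, if_pos rfl, Finset.card_singleton, one_mul]
    have : ∏ j ∈ Finset.univ.erase j0, (if j = j0 then ({i} : Finset ι) else J.erase i).card
        = ∏ _j ∈ Finset.univ.erase j0, (J.erase i).card := by
      refine Finset.prod_congr rfl fun j hj => ?_
      rw [if_neg (Finset.mem_erase.1 hj).1]
    rw [this, Finset.prod_const, Finset.card_erase_of_mem (Finset.mem_univ j0),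
      Finset.card_univ, Fintype.card_fin, Finset.card_erase_of_mem hi]
  calc F.card ≤ (Finset.univ.biUnion (fun j0 : Fin (2 * k) =>
        F.filter (fun f => f j0 = i))).card := Finset.card_le_card hcover
    _ ≤ ∑ j0 : Fin (2 * k), (F.filter (fun f => f j0 = i)).card :=
        Finset.card_biUnion_le
    _ ≤ ∑ _j0 : Fin (2 * k), (J.card - 1) ^ (2 * k - 1) :=
        Finset.sum_le_sum fun j0 _ => heach j0
    _ = (2 * k) * (J.card - 1) ^ (2 * k - 1) := by
        rw [Finset.sum_const, Finset.card_univ, Fintype.card_fin, smul_eq_mul]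

theorem lemD' {J : Finset ι} {i : ι} (hi : i ∈ J) :
    ∑ a ∈ badF p k s t α J, X p k α J a i ≤
      (badF p k s t α (J.erase i)).card *
        (2 ^ (2 * k) * ((2 * k) * (J.card - 1) ^ (2 * k - 1))) := by
  classical
  set Z : Finset ((Fin (2 * k) → Bool) × (Fin (2 * k) → ι)) :=
    Finset.univ.filter (fun z => (∀ j, z.2 j ∈ J) ∧ fiberCard k z i = 1) with hZ
  have hmaps : ∀ a ∈ badF p k s t α J,
      Function.update a i 0 ∈ badF p k s t α (J.erase i) :=
    fun a ha => update_mem_badF i ha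
  rw [← Finset.sum_fiberwise_of_maps_to hmaps (fun a => X p k α J a i)]
  have hinner : ∀ a' ∈ badF p k s t α (J.erase i),
      ∑ a ∈ (badF p k s t α J).filter (fun a => Function.update a i 0 = a'),
        X p k α J a i ≤ Z.card := by
    intro a' _
    set fib := (badF p k s t α J).filter (fun a => Function.update a i 0 = a') with hfib
    have hdisj : ∀ a₁ ∈ fib, ∀ a₂ ∈ fib, a₁ ≠ a₂ →
        Disjoint ((cntSet p k α J a₁).filter (fun z => fiberCard k z i = 1))
          ((cntSet p k α J a₂).filter (fun z => fiberCard k z i = 1)) := by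
      intro a₁ h₁ a₂ h₂ hne
      rw [Finset.disjoint_left]
      intro z hz₁ hz₂
      obtain ⟨hzc₁, hzf₁⟩ := Finset.mem_filter.1 hz₁
      obtain ⟨hzc₂, hzf₂⟩ := Finset.mem_filter.1 hz₂
      have hu₁ := (Finset.mem_filter.1 h₁).2
      have hu₂ := (Finset.mem_filter.1 h₂).2
      have hoff : ∀ x, x ≠ i → a₁ x = a₂ x := by
        intro x hx
        have := congrFun (hu₁.trans hu₂.symm) x
        rwa [Function.update_of_ne hx, Function.update_of_ne hx] at this
      have hs₁ : ssum p k a₁ z = 0 := ((Finset.mem_filter.1 hzc₁).2).2.1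
      have hs₂ : ssum p k a₂ z = 0 := ((Finset.mem_filter.1 hzc₂).2).2.1
      exact hne (eq_of_ssum z hzf₁ hoff hs₁ hs₂)
    have hsum : ∑ a ∈ fib, X p k α J a i
        = (fib.biUnion (fun a =>
            (cntSet p k α J a).filter (fun z => fiberCard k z i = 1))).card :=
      (Finset.card_biUnion hdisj).symm
    rw [hsum]
    refine Finset.card_le_card ?_
    intro z hz
    obtain ⟨a, _, hza⟩ := Finset.mem_biUnion.1 hz
    obtain ⟨hzc, hzf⟩ := Finset.mem_filter.1 hza
    exact Finset.mem_filter.2 ⟨Finset.mem_univ _,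
      ((Finset.mem_filter.1 hzc).2).1, hzf⟩
  calc ∑ a' ∈ badF p k s t α (J.erase i),
        ∑ a ∈ (badF p k s t α J).filter (fun a => Function.update a i 0 = a'),
          X p k α J a i
      ≤ ∑ _a' ∈ badF p k s t α (J.erase i), Z.card := Finset.sum_le_sum hinner
    _ = (badF p k s t α (J.erase i)).card * Z.card := by
        rw [Finset.sum_const, smul_eq_mul]
    _ ≤ _ := Nat.mul_le_mul_left _ (cardZ_le hi)


theorem badF_card_le (J : Finset ι) : (badF p k s t α J).card ≤ p ^ J.card := by
  classical
  have hsub : badF p k s t α J ⊆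
      Fintype.piFinset (fun j => if j ∈ J then (Finset.univ : Finset (ZMod p)) else {0}) := by
    intro a ha
    obtain ⟨-, hsupp, -⟩ := Finset.mem_filter.1 ha
    refine Fintype.mem_piFinset.2 fun j => ?_
    by_cases hj : j ∈ J
    · rw [if_pos hj]; exact Finset.mem_univ _
    · rw [if_neg hj, Finset.mem_singleton]
      exact hsupp j hj
  refine (Finset.card_le_card hsub).trans ?_
  rw [Fintype.card_piFinset]
  have : ∀ j : ι, (if j ∈ J then (Finset.univ : Finset (ZMod p)) else {0}).card
      = if j ∈ J then p else 1 := by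
    intro j
    by_cases hj : j ∈ J <;> simp [hj, ZMod.card]
  simp_rw [this]
  rw [Finset.prod_ite_mem, Finset.univ_inter, Finset.prod_const]

theorem main_ind (hp : 0 < p) (hk : 1 ≤ k) (hs : 1 ≤ s) (ht : 1 ≤ t) (hα : 0 < α)
    (m : ℕ) (hm : s ≤ m) :
    ∀ J : Finset ι, J.card = m →
      ((badF p k s t α J).card : ℝ) ≤
        ((s : ℝ) / m) ^ (2 * k - 1) * (α * t) ^ ((s : ℝ) - (m : ℝ)) * (p : ℝ) ^ m := by
  induction m, hm using Nat.le_induction with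
  | base =>
    intro J hJ
    have h1 : ((badF p k s t α J).card : ℝ) ≤ (p : ℝ) ^ s := by
      have := badF_card_le (p := p) (k := k) (s := s) (t := t) (α := α) J
      rw [hJ] at this
      exact_mod_cast this
    have h2 : ((s : ℝ) / s) ^ (2 * k - 1) = 1 := by
      rw [div_self (by positivity : (s : ℝ) ≠ 0), one_pow]
    have h3 : (α * t) ^ ((s : ℝ) - (s : ℝ)) = 1 := by
      rw [sub_self, Real.rpow_zero]
    rw [h2, h3, one_mul, one_mul]
    exact h1
  | succ m hsm ih =>
    intro J hJ
    have hm1 : 1 ≤ m := le_trans hs hsm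
    have hpos_m : (0 : ℝ) < m := by exact_mod_cast hm1
    have hpos_p : (0 : ℝ) < p := by exact_mod_cast hp
    have hpos_t : (0 : ℝ) < t := by exact_mod_cast ht
    have hpos_k : (0 : ℝ) < k := by exact_mod_cast hk
    set N : ℝ := ((badF p k s t α J).card : ℝ) with hN
    set T : ℝ := (t : ℝ) * 2 ^ (2 * k) * ((m : ℝ) + 1) ^ (2 * k) / p with hT
    set K : ℝ := 2 ^ (2 * k) * ((2 * (k : ℝ)) * (m : ℝ) ^ (2 * k - 1)) with hK
    set B : ℝ := ((s : ℝ) / m) ^ (2 * k - 1) * (α * t) ^ ((s : ℝ) - (m : ℝ)) * (p : ℝ) ^ m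
      with hB
    have hJc : ((J.card : ℕ) : ℝ) = (m : ℝ) + 1 := by rw [hJ]; push_cast; ring
    have hCT : 0 < 2 * α * k * T := by
      rw [hT]
      positivity
    -- the key inequality
    have hkey : N * (2 * α * k * T) ≤ ((m : ℝ) + 1) * (B * K) := by
      calc N * (2 * α * k * T)
          = ∑ _a ∈ badF p k s t α J, (2 * α * k * T) := by
            rw [Finset.sum_const, nsmul_eq_mul, hN]
        _ ≤ ∑ a ∈ badF p k s t α J, ∑ i ∈ J, (X p k α J a i : ℝ) := by
            refine Finset.sum_le_sum fun a ha => ?_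
            have h := lemC (p := p) (k := k) (s := s) (t := t) hα J a ha
              (by rw [hJ]; omega)
            rw [hT, ← hJc]
            exact h
        _ = ∑ i ∈ J, ∑ a ∈ badF p k s t α J, (X p k α J a i : ℝ) := Finset.sum_comm
        _ ≤ ∑ i ∈ J, ((badF p k s t α (J.erase i)).card : ℝ) * K := by
            refine Finset.sum_le_sum fun i hi => ?_
            have hD := lemD' (p := p) (k := k) (s := s) (t := t) (α := α) hi
            have hDR : (∑ a ∈ badF p k s t α J, (X p k α J a i : ℝ))
                ≤ ((badF p k s t α (J.erase i)).card : ℝ) *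
                  ((2 : ℝ) ^ (2 * k) * ((2 * (k : ℝ)) * ((J.card - 1 : ℕ) : ℝ) ^ (2 * k - 1))) := by
              rw [← Nat.cast_sum]
              exact_mod_cast hD
            have hcast : ((J.card - 1 : ℕ) : ℝ) = (m : ℝ) := by
              rw [hJ]; simp
            rwa [hcast, ← hK] at hDR
        _ ≤ ∑ i ∈ J, B * K := by
            refine Finset.sum_le_sum fun i hi => ?_
            have hcard : (J.erase i).card = m := by
              rw [Finset.card_erase_of_mem hi, hJ]; omega
            
            have := ih (J.erase i) hcard
            have hKpos : (0 : ℝ) ≤ K := by rw [hK]; positivity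
            exact mul_le_mul_of_nonneg_right this hKpos
        _ = ((m : ℝ) + 1) * (B * K) := by
            rw [Finset.sum_const, nsmul_eq_mul, hJc]
    -- the algebraic identity
    have hQ : (α * t) ^ ((s : ℝ) - (m : ℝ))
        = (α * t) ^ ((s : ℝ) - ((m : ℝ) + 1)) * (α * t) := by
      rw [← Real.rpow_add_one (by positivity : (α * t) ≠ 0)]
      congr 1
      ring
    have hiden : ((m : ℝ) + 1) * (B * K)
        = (((s : ℝ) / ((m : ℝ) + 1)) ^ (2 * k - 1) *
            (α * t) ^ ((s : ℝ) - ((m : ℝ) + 1)) * (p : ℝ) ^ (m + 1)) * (2 * α * k * T) := by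
      rw [hB, hK, hT, hQ]
      have h2k : 2 * k = (2 * k - 1) + 1 := by omega
      rw [h2k]
      set e := 2 * k - 1 with he
      set Q := (α * t) ^ ((s : ℝ) - ((m : ℝ) + 1)) with hQ2
      rw [pow_succ (p : ℝ) m, div_pow, div_pow, Nat.add_sub_cancel]
      field_simp
      ring
    have hfin : N * (2 * α * k * T) ≤
        (((s : ℝ) / ((m : ℝ) + 1)) ^ (2 * k - 1) *
          (α * t) ^ ((s : ℝ) - ((m : ℝ) + 1)) * (p : ℝ) ^ (m + 1)) * (2 * α * k * T) := by
      rw [← hiden]; exact hkey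
    have := le_of_mul_le_mul_right hfin hCT
    -- match the cast forms
    have hgoalcast : ((m : ℝ) + 1) = (((m + 1 : ℕ)) : ℝ) := by push_cast; ring
    calc N ≤ ((s : ℝ) / ((m : ℝ) + 1)) ^ (2 * k - 1) *
          (α * t) ^ ((s : ℝ) - ((m : ℝ) + 1)) * (p : ℝ) ^ (m + 1) := this
      _ = ((s : ℝ) / ((m + 1 : ℕ) : ℝ)) ^ (2 * k - 1) *
          (α * t) ^ ((s : ℝ) - ((m + 1 : ℕ) : ℝ)) * (p : ℝ) ^ (m + 1) := by
          rw [← hgoalcast]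

end CTaux

/-- The counting theorem: for a prime `p`, positive integers `k, n`, `s ∈ [n]`, `t ∈ [p]` and
`α ∈ (0,1)`, the number of vectors `a ∈ F_p^n` all of whose subvectors `b` of dimension at least
`s` satisfy `R_k^α(b) ≥ t·2^{2k}·|b|^{2k}/p` is at most `(s/n)^{2k−1}·(αt)^{s−n}·p^n`. -/
theorem counting_theorem :
    ∀ (p : ℕ), p.Prime → ∀ (k n s t : ℕ) (α : ℝ),
      1 ≤ k → 1 ≤ n → 1 ≤ s → s ≤ n → 1 ≤ t → t ≤ p → 0 < α → α < 1 →
      (Set.ncard {a : Fin n → ZMod p |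
          ∀ I : Finset (Fin n), s ≤ I.card →
            (t : ℝ) * 2 ^ (2 * k) * (I.card : ℝ) ^ (2 * k) / p ≤
              (RkA p k α (fun i : {x // x ∈ I} => a i.1) : ℝ)} : ℝ) ≤
        ((s : ℝ) / n) ^ (2 * k - 1) * (α * t) ^ ((s : ℝ) - (n : ℝ)) * (p : ℝ) ^ n := by
  intro p hp k n s t α hk hn hs hsn ht htp hα hα1
  haveI : NeZero p := ⟨hp.pos.ne'⟩
  classical
  have hset : {a : Fin n → ZMod p |
      ∀ I : Finset (Fin n), s ≤ I.card →
        (t : ℝ) * 2 ^ (2 * k) * (I.card : ℝ) ^ (2 * k) / p ≤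
          (RkA p k α (fun i : {x // x ∈ I} => a i.1) : ℝ)}
      = ↑(CTaux.badF p k s t α (Finset.univ : Finset (Fin n))) := by
    ext a
    simp only [Set.mem_setOf_eq, CTaux.badF, Finset.mem_coe, Finset.mem_filter,
      Finset.mem_univ, true_and]
    constructor
    · intro h
      refine ⟨fun j hj => (hj trivial).elim, fun I _ hsI => ?_⟩
      have := h I hsI
      rwa [CTaux.RkA_eq] at this
    · rintro ⟨h1, h2⟩ I hsI
      rw [CTaux.RkA_eq]
      exact h2 I (Finset.subset_univ I) hsI
  rw [hset, Set.ncard_coe_finset]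
  have huc : (Finset.univ : Finset (Fin n)).card = n := by
    rw [Finset.card_univ, Fintype.card_fin]
  have := CTaux.main_ind hp.pos hk hs ht hα n hsn (Finset.univ : Finset (Fin n)) huc
  exact this
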